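/- If S, T ∈ 𝔖 are nonempty with canonical forms S₁⋯S_r and T₁⋯T_q respectively, then the following are equivalent: (a) S ⪯ T; (b) r ≤ q and Supp S_i ⊆ Supp T_i for 0 < i ≤ r; (c) m_S(v) ≤ m_T(v) for all v ∈ Γ₀. -/

import Mathlib

namespace KP

/-! ## Quivers on a fixed vertex set `Fin n`.

An orientation is encoded by `Λ : Fin n → Fin n → ℕ`, where `Λ a b` is the number of
arrows from `a` to `b`.  The underlying graph is recorded by `edges Λ a b = Λ a b + Λ b a`. -/

/-- The orientation `σ_x Λ` obtained by reversing every arrow incident with `x`. -/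
def flipO {n : ℕ} (x : Fin n) (Λ : Fin n → Fin n → ℕ) : Fin n → Fin n → ℕ :=
  fun a b => if a = x ∨ b = x then Λ b a else Λ a b

/-- Number of edges of the underlying graph joining `a` and `b`. -/
def edges {n : ℕ} (Λ : Fin n → Fin n → ℕ) (a b : Fin n) : ℕ := Λ a b + Λ b a

/-- `x` is a sink: no arrow starts at `x`. -/
def IsSink {n : ℕ} (Λ : Fin n → Fin n → ℕ) (x : Fin n) : Prop := ∀ y, Λ x y = 0

/-- `S` is a `(+)`-admissible sequence of vertices on `(Γ, Λ)`. -/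
def Admissible {n : ℕ} (Λ : Fin n → Fin n → ℕ) : List (Fin n) → Prop
  | [] => True
  | x :: xs => IsSink Λ x ∧ Admissible (flipO x Λ) xs

/-- The orientation `Λ^S`. -/
def orientAfter {n : ℕ} (Λ : Fin n → Fin n → ℕ) : List (Fin n) → (Fin n → Fin n → ℕ)
  | [] => Λ
  | x :: xs => orientAfter (flipO x Λ) xs

/-- Elementary move: interchange two consecutive vertices not joined by an edge. -/
inductive SwapRel {n : ℕ} (E : Fin n → Fin n → ℕ) : List (Fin n) → List (Fin n) → Prop
  | swap (l₁ l₂ : List (Fin n)) (a b : Fin n) (h : E a b = 0) :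
      SwapRel E (l₁ ++ a :: b :: l₂) (l₁ ++ b :: a :: l₂)

/-- The equivalence `∼` on sequences of vertices: reflexive–transitive closure of the
(symmetric) relation `SwapRel`. -/
def Sim {n : ℕ} (E : Fin n → Fin n → ℕ) : List (Fin n) → List (Fin n) → Prop :=
  Relation.ReflTransGen (SwapRel E)

/-- The preorder `S ⪯ T` : `T ∼ S ++ U` for some `(+)`-admissible sequence `U` on `(Γ, Λ^S)`. -/
def Preceq {n : ℕ} (Λ : Fin n → Fin n → ℕ) (S T : List (Fin n)) : Prop :=
  ∃ U, Admissible (orientAfter Λ S) U ∧ Sim (edges Λ) T (S ++ U)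

/-- Support of a sequence of vertices. -/
def suppOf {n : ℕ} (S : List (Fin n)) : Set (Fin n) := {v | v ∈ S}

/-- The partial order on vertices: `x ≤ y` iff there is a path from `x` to `y` in `(Γ, Λ)`. -/
def PathLE {n : ℕ} (Λ : Fin n → Fin n → ℕ) (x y : Fin n) : Prop :=
  Relation.ReflTransGen (fun a b => Λ a b ≠ 0) x y

/-- A filter (up-closed set) of the poset `(Γ₀, Λ)`. -/
def IsFilter {n : ℕ} (Λ : Fin n → Fin n → ℕ) (F : Set (Fin n)) : Prop :=
  ∀ x ∈ F, ∀ y, PathLE Λ x y → y ∈ F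

/-- The principal filter `⟨x⟩`. -/
def upSet {n : ℕ} (Λ : Fin n → Fin n → ℕ) (x : Fin n) : Set (Fin n) := {y | PathLE Λ x y}

/-- The hull `H_Λ(F)`: the smallest filter containing `F` and every vertex joined
by an edge to a vertex of `F`. -/
def hull {n : ℕ} (Λ : Fin n → Fin n → ℕ) (F : Set (Fin n)) : Set (Fin n) :=
  {y | ∃ x, (x ∈ F ∨ ∃ z ∈ F, edges Λ z x ≠ 0) ∧ PathLE Λ x y}

/-- `segs` is a canonical form of `S` (Proposition 2.1): `S ∼ S₁S₂⋯S_r`, each segment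
consists of distinct vertices, is nonempty, and `Supp S_i = Supp (S_i S_{i+1} ⋯ S_r)`. -/
def Segments {n : ℕ} (Λ : Fin n → Fin n → ℕ) (S : List (Fin n))
    (segs : List (List (Fin n))) : Prop :=
  Admissible Λ segs.flatten ∧ Sim (edges Λ) S segs.flatten ∧
  (∀ seg ∈ segs, seg ≠ [] ∧ seg.Nodup) ∧
  ∀ i, i < segs.length → suppOf (segs.getD i []) = suppOf ((segs.drop i).flatten)

/-- `J` is (a representative of) the join `S ∨ T` (Definition 2.4):  the canonical form of `J`
has `Supp R_i = Supp S_i ∪ Supp T_i` (out-of-range segments read as `∅`). -/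
def IsJoin {n : ℕ} (Λ : Fin n → Fin n → ℕ) (S T J : List (Fin n)) : Prop :=
  ∃ CS CT CJ, Segments Λ S CS ∧ Segments Λ T CT ∧ Segments Λ J CJ ∧
    ∀ i, suppOf (CJ.getD i []) = suppOf (CS.getD i []) ∪ suppOf (CT.getD i [])

/-- `M` is (a representative of) the meet `S ∧ T` (Definition 2.4). -/
def IsMeet {n : ℕ} (Λ : Fin n → Fin n → ℕ) (S T M : List (Fin n)) : Prop :=
  ∃ CS CT CM, Segments Λ S CS ∧ Segments Λ T CT ∧ Segments Λ M CM ∧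
    ∀ i, suppOf (CM.getD i []) = suppOf (CS.getD i []) ∩ suppOf (CT.getD i [])

/-- `S` is (equivalent to) the join `T₁ ∨ ⋯ ∨ T_l` of the list of sequences `Ts`. -/
def IsJoinList {n : ℕ} (Λ : Fin n → Fin n → ℕ) : List (List (Fin n)) → List (Fin n) → Prop
  | [], S => S = []
  | T :: Ts, S => ∃ J, IsJoinList Λ Ts J ∧ IsJoin Λ T J S

/-- The segments of a canonical form of a principal sequence `S_{r,x}` (Definition 3.1). -/
def PrincipalSegs {n : ℕ} (Λ : Fin n → Fin n → ℕ) (segs : List (List (Fin n)))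
    (r : ℕ) (x : Fin n) : Prop :=
  segs.length = r ∧ 0 < r ∧
  (∀ i, i + 1 < r → suppOf (segs.getD i []) = hull Λ (suppOf (segs.getD (i+1) []))) ∧
  suppOf (segs.getD (r-1) []) = upSet Λ x

/-- `S ∼ S_{r,x}`, the principal `(+)`-admissible sequence of size `r` with
`Supp S_r = ⟨x⟩`. -/
def IsPrincipalSeq {n : ℕ} (Λ : Fin n → Fin n → ℕ) (r : ℕ) (x : Fin n)
    (S : List (Fin n)) : Prop :=
  ∃ segs, Segments Λ S segs ∧ PrincipalSegs Λ segs r x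

/-- `S` is a principal `(+)`-admissible sequence. -/
def IsPrincipal {n : ℕ} (Λ : Fin n → Fin n → ℕ) (S : List (Fin n)) : Prop :=
  ∃ r x, IsPrincipalSeq Λ r x S


/-! ## Representations of `(Γ, Λ)` over a field `k`. -/

/-- A (finite-dimensional) representation of the quiver `(Γ, Λ)` over `k`:
the space at vertex `x` is `Fin (d x) → k`, and each arrow carries a linear map. -/
structure Rep (k : Type) [Field k] (n : ℕ) (Λ : Fin n → Fin n → ℕ) where
  d : Fin n → ℕ
  f : ∀ a b : Fin n, Fin (Λ a b) → ((Fin (d a) → k) →ₗ[k] (Fin (d b) → k))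

variable {k : Type} [Field k] {n : ℕ}

/-- A morphism of representations. -/
structure RepHom {Λ : Fin n → Fin n → ℕ} (M N : Rep k n Λ) where
  g : ∀ x, (Fin (M.d x) → k) →ₗ[k] (Fin (N.d x) → k)
  comm : ∀ a b i v, g b (M.f a b i v) = N.f a b i (g a v)

/-- Isomorphism of representations. -/
def RepIso {Λ : Fin n → Fin n → ℕ} (M N : Rep k n Λ) : Prop :=
  ∃ g : ∀ x, (Fin (M.d x) → k) ≃ₗ[k] (Fin (N.d x) → k),
    ∀ a b i v, g b (M.f a b i v) = N.f a b i (g a v)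

/-- The zero representation. -/
def IsZeroRep {Λ : Fin n → Fin n → ℕ} (M : Rep k n Λ) : Prop := ∀ x, M.d x = 0

/-- Cast between the standard spaces. -/
def castL (k : Type) [Field k] {m m' : ℕ} (h : m = m') : (Fin m → k) ≃ₗ[k] (Fin m' → k) :=
  LinearEquiv.funCongrLeft k k (finCongr h.symm)

/-- The splitting `(Fin (m + p) → k) ≃ₗ (Fin m → k) × (Fin p → k)`. -/
def splitL (k : Type) [Field k] (m p : ℕ) : (Fin (m + p) → k) ≃ₗ[k] (Fin m → k) × (Fin p → k) :=
  (LinearEquiv.funCongrLeft k k finSumFinEquiv).trans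
    (LinearEquiv.sumArrowLequivProdArrow _ _ k k)

/-- Direct sum of two representations. -/
def dSum {Λ : Fin n → Fin n → ℕ} (M N : Rep k n Λ) : Rep k n Λ where
  d x := M.d x + N.d x
  f a b i :=
    (splitL k (M.d b) (N.d b)).symm.toLinearMap ∘ₗ
      (LinearMap.prodMap (M.f a b i) (N.f a b i)) ∘ₗ (splitL k (M.d a) (N.d a)).toLinearMap

/-- The zero representation (as an object). -/
def zeroRep (k : Type) [Field k] (n : ℕ) (Λ : Fin n → Fin n → ℕ) : Rep k n Λ where
  d _ := 0
  f _ _ _ := 0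

/-- Direct sum of a list of representations. -/
def dSumList {Λ : Fin n → Fin n → ℕ} (L : List (Rep k n Λ)) : Rep k n Λ :=
  L.foldr dSum (zeroRep k n Λ)

/-- `M` is indecomposable. -/
def Indecomp {Λ : Fin n → Fin n → ℕ} (M : Rep k n Λ) : Prop :=
  ¬ IsZeroRep M ∧ ∀ A B : Rep k n Λ, RepIso M (dSum A B) → IsZeroRep A ∨ IsZeroRep B

/-- `X` is a direct summand of `M`. -/
def IsSummand {Λ : Fin n → Fin n → ℕ} (X M : Rep k n Λ) : Prop :=
  ∃ Y, RepIso M (dSum X Y)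

/-! ### Reflection functors (on objects) -/

/-- Index type of the arrows ending at `x`. -/
abbrev Arin {n : ℕ} (Λ : Fin n → Fin n → ℕ) (x : Fin n) := Σ y : Fin n, Fin (Λ y x)

/-- Index type of the arrows starting at `x`. -/
abbrev Aout {n : ℕ} (Λ : Fin n → Fin n → ℕ) (x : Fin n) := Σ y : Fin n, Fin (Λ x y)

/-- The map `h : ⊕_{a : y → x} V(y) → V(x)` induced by the maps along the arrows ending at `x`. -/
noncomputable def inMap (Λ : Fin n → Fin n → ℕ) (M : Rep k n Λ) (x : Fin n) :
    ((p : Arin Λ x) → (Fin (M.d p.1) → k)) →ₗ[k] (Fin (M.d x) → k) :=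
  ∑ p : Arin Λ x, (M.f p.1 x p.2) ∘ₗ LinearMap.proj p

/-- The map `h' : V(x) → ⊕_{a : x → y} V(y)` induced by the maps along arrows starting at `x`. -/
def outMap (Λ : Fin n → Fin n → ℕ) (M : Rep k n Λ) (x : Fin n) :
    (Fin (M.d x) → k) →ₗ[k] ((p : Aout Λ x) → (Fin (M.d p.1) → k)) :=
  LinearMap.pi fun p => M.f x p.1 p.2

noncomputable def kerEquiv (Λ : Fin n → Fin n → ℕ) (M : Rep k n Λ) (x : Fin n) :
    LinearMap.ker (inMap Λ M x) ≃ₗ[k]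
      (Fin (Module.finrank k (LinearMap.ker (inMap Λ M x))) → k) :=
  (Module.finBasis k _).equivFun

noncomputable def cokerEquiv (Λ : Fin n → Fin n → ℕ) (M : Rep k n Λ) (x : Fin n) :
    (((p : Aout Λ x) → (Fin (M.d p.1) → k)) ⧸ LinearMap.range (outMap Λ M x)) ≃ₗ[k]
      (Fin (Module.finrank k (((p : Aout Λ x) → (Fin (M.d p.1) → k)) ⧸
        LinearMap.range (outMap Λ M x))) → k) :=
  (Module.finBasis k _).equivFun

/-- The positive reflection functor `F_x⁺` (on objects): the space at `x` is replaced
by the kernel of `inMap`, with the maps along the reversed arrows induced by inclusion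
followed by the projections. -/
noncomputable def reflPlus (x : Fin n) (Λ : Fin n → Fin n → ℕ) (M : Rep k n Λ) :
    Rep k n (flipO x Λ) where
  d z := if z = x then Module.finrank k (LinearMap.ker (inMap Λ M x)) else M.d z
  f a b i :=
    if ha : a = x then
      if hb : b = x then 0
      else
        (castL k (if_neg hb).symm).toLinearMap ∘ₗ
          (LinearMap.proj (φ := fun p : Arin Λ x => Fin (M.d p.1) → k)
            (⟨b, Fin.cast (by subst ha; simp [flipO]) i⟩ : Arin Λ x)) ∘ₗ
          (LinearMap.ker (inMap Λ M x)).subtype ∘ₗ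
          (kerEquiv Λ M x).symm.toLinearMap ∘ₗ (castL k (if_pos ha)).toLinearMap
    else
      if hb : b = x then 0
      else
        (castL k (if_neg hb).symm).toLinearMap ∘ₗ
          M.f a b (Fin.cast (by simp [flipO, ha, hb]) i) ∘ₗ
          (castL k (if_neg ha)).toLinearMap

/-- The negative reflection functor `F_x⁻` (on objects), presented as a map from
representations of `(Γ, σ_x Λ)` to representations of `(Γ, Λ)`: the space at `x` is
replaced by the cokernel of `outMap`. -/
noncomputable def reflMinus (x : Fin n) (Λ : Fin n → Fin n → ℕ)
    (N : Rep k n (flipO x Λ)) : Rep k n Λ where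
  d z := if z = x then
      Module.finrank k (((p : Aout (flipO x Λ) x) → (Fin (N.d p.1) → k)) ⧸
        LinearMap.range (outMap (flipO x Λ) N x))
    else N.d z
  f a b i :=
    if hb : b = x then
      if ha : a = x then 0
      else
        (castL k (if_pos hb).symm).toLinearMap ∘ₗ
          (cokerEquiv (flipO x Λ) N x).toLinearMap ∘ₗ
          (LinearMap.range (outMap (flipO x Λ) N x)).mkQ ∘ₗ
          (LinearMap.single k (fun p : Aout (flipO x Λ) x => Fin (N.d p.1) → k)
            (⟨a, Fin.cast (by subst hb; simp [flipO]) i⟩ : Aout (flipO x Λ) x)) ∘ₗ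
          (castL k (if_neg ha)).toLinearMap
    else
      if ha : a = x then 0
      else
        (castL k (if_neg hb).symm).toLinearMap ∘ₗ
          N.f a b (Fin.cast (by simp [flipO, ha, hb]) i) ∘ₗ
          (castL k (if_neg ha)).toLinearMap

/-- `F(S) = F_{x_s}⁺ ⋯ F_{x_1}⁺` applied to a representation. -/
noncomputable def FList : (S : List (Fin n)) → (Λ : Fin n → Fin n → ℕ) → Rep k n Λ →
    Rep k n (orientAfter Λ S)
  | [], _, M => M
  | x :: xs, Λ, M => FList xs (flipO x Λ) (reflPlus x Λ M)

/-- `S` annihilates `M` : `F(S) M = 0`. -/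
def Annihilates (Λ : Fin n → Fin n → ℕ) (S : List (Fin n)) (M : Rep k n Λ) : Prop :=
  IsZeroRep (FList S Λ M)

/-- `M` is preprojective: some `(+)`-admissible sequence annihilates it. -/
def Preprojective (Λ : Fin n → Fin n → ℕ) (M : Rep k n Λ) : Prop :=
  ∃ S, Admissible Λ S ∧ Annihilates Λ S M

/-- `S` is a shortest `(+)`-admissible sequence annihilating `M` : it annihilates `M` and no
proper subsequence of `S` annihilates `M`.  (This predicate is invariant under `∼`, so it
expresses `S ∼ S_M`.) -/
def IsShortestAnn (Λ : Fin n → Fin n → ℕ) (M : Rep k n Λ) (S : List (Fin n)) : Prop :=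
  Admissible Λ S ∧ Annihilates Λ S M ∧
  ∀ S', Admissible Λ S' → Annihilates Λ S' M → Preceq Λ S' S → Sim (edges Λ) S' S

/-- The simple representation `L_x` concentrated at the vertex `x`. -/
def simpleRep (Λ : Fin n → Fin n → ℕ) (x : Fin n) : Rep k n Λ where
  d z := if z = x then 1 else 0
  f _ _ _ := 0

/-- `M(S) = F_{x₁}⁻ F_{x₂}⁻ ⋯ F_{x_{s-1}}⁻ (L_{x_s})`, where `L_{x_s}` is the simple
(projective) module over `k(Γ, σ_{x_{s-1}} ⋯ σ_{x_1} Λ)` at the vertex `x_s`. -/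
noncomputable def Mof : (Λ : Fin n → Fin n → ℕ) → (S : List (Fin n)) → Rep k n Λ
  | Λ, [] => zeroRep k n Λ
  | Λ, [x] => simpleRep Λ x
  | Λ, x :: y :: ys => reflMinus x Λ (Mof (flipO x Λ) (y :: ys))

variable {n : ℕ}

/-! ## The Weyl group -/

/-- The simple reflection `σ_i` attached to a generalized Cartan matrix `A`,
as a linear endomorphism of `ℤⁿ` : `σ_i(v) = v - (∑ l, a_{il} v_l) e_i`. -/
def sigmaL (A : Fin n → Fin n → ℤ) (i : Fin n) : (Fin n → ℤ) →ₗ[ℤ] (Fin n → ℤ) where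
  toFun v := v - (∑ l, A i l * v l) • Pi.single i 1
  map_add' v w := by
    simp only [Pi.add_apply, mul_add, Finset.sum_add_distrib, add_smul]
    abel
  map_smul' c v := by
    simp only [Pi.smul_apply, smul_eq_mul, RingHom.id_apply, smul_sub]
    congr 1
    rw [smul_smul, Finset.mul_sum]
    congr 1
    exact Finset.sum_congr rfl fun l _ => by ring

theorem sigma_invol (A : Fin n → Fin n → ℤ) (hA : ∀ i, A i i = 2) (i : Fin n) :
    (sigmaL A i).comp (sigmaL A i) = LinearMap.id := by
  apply LinearMap.ext
  intro v
  simp only [LinearMap.comp_apply, LinearMap.id_apply, sigmaL, LinearMap.coe_mk, AddHom.coe_mk]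
  set c := ∑ l, A i l * v l with hc
  set s : Fin n → ℤ := Pi.single i 1 with hs
  have h1 : ∑ l, A i l * (v - c • s) l = -c := by
    have h2 : ∀ l, A i l * (v - c • s) l = A i l * v l - c * (A i l * s l) := fun l => by
      simp only [Pi.sub_apply, Pi.smul_apply, smul_eq_mul]
      ring
    rw [Finset.sum_congr rfl fun l _ => h2 l, Finset.sum_sub_distrib, ← Finset.mul_sum]
    have h3 : ∑ l, A i l * s l = 2 := by
      rw [Finset.sum_eq_single i]
      · simp [hs, hA i]
      · intro b _ hb
        simp [hs, Pi.single_eq_of_ne hb]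
      · simp
    rw [h3, ← hc]
    ring
  rw [h1]
  ext j
  simp only [Pi.sub_apply, Pi.smul_apply, smul_eq_mul]
  ring

/-- The simple reflection `σ_i` as an automorphism of `ℤⁿ`. -/
def sigmaE (A : Fin n → Fin n → ℤ) (hA : ∀ i, A i i = 2) (i : Fin n) :
    (Fin n → ℤ) ≃ₗ[ℤ] (Fin n → ℤ) :=
  LinearEquiv.ofLinear (sigmaL A i) (sigmaL A i) (sigma_invol A hA i) (sigma_invol A hA i)

/-- The length `ℓ(w)`: the least `l ≥ 0` such that `w` is a product of `l` simple
reflections. -/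
noncomputable def wordLen (A : Fin n → Fin n → ℤ) (hA : ∀ i, A i i = 2)
    (w : (Fin n → ℤ) ≃ₗ[ℤ] (Fin n → ℤ)) : ℕ :=
  sInf {l | ∃ ys : List (Fin n), ys.length = l ∧ w = (ys.map (sigmaE A hA)).prod}

/-- The word `w(S) = σ_{x_s} ⋯ σ_{x_1}` associated to a sequence `S = x₁, …, x_s`. -/
def wordOf (A : Fin n → Fin n → ℤ) (hA : ∀ i, A i i = 2) (S : List (Fin n)) :
    (Fin n → ℤ) ≃ₗ[ℤ] (Fin n → ℤ) :=
  ((S.reverse).map (sigmaE A hA)).prod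

/-- The symmetric generalized Cartan matrix of the underlying graph of `(Γ, Λ)`. -/
def cartanOf (Λ : Fin n → Fin n → ℕ) : Fin n → Fin n → ℤ :=
  fun i j => if i = j then 2 else -(edges Λ i j : ℤ)

theorem cartan_diag (Λ : Fin n → Fin n → ℕ) : ∀ i, cartanOf Λ i i = 2 := by
  intro i; simp [cartanOf]

/-- The simple reflections of the Weyl group of the underlying graph of `(Γ, Λ)`. -/
def wSig (Λ : Fin n → Fin n → ℕ) : Fin n → ((Fin n → ℤ) ≃ₗ[ℤ] (Fin n → ℤ)) :=
  sigmaE (cartanOf Λ) (cartan_diag Λ)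

/-- `w(S)` for a sequence of vertices of `(Γ, Λ)`. -/
def wordOfSeq (Λ : Fin n → Fin n → ℕ) (S : List (Fin n)) :
    (Fin n → ℤ) ≃ₗ[ℤ] (Fin n → ℤ) :=
  ((S.reverse).map (wSig Λ)).prod

/-- The word `w(S)` is reduced: `ℓ(w(S))` equals the number of letters of `S`. -/
noncomputable def IsReducedSeq (Λ : Fin n → Fin n → ℕ) (S : List (Fin n)) : Prop :=
  wordLen (cartanOf Λ) (cartan_diag Λ) (wordOfSeq Λ S) = S.length

/-! ## Dynkin graphs of types A, D, E -/

def edgeA (n : ℕ) : Fin n → Fin n → ℕ := fun i j =>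
  if (i : ℕ) + 1 = (j : ℕ) ∨ (j : ℕ) + 1 = (i : ℕ) then 1 else 0

def edgeD (n : ℕ) : Fin n → Fin n → ℕ := fun i j =>
  if ((i : ℕ) = 0 ∧ (j : ℕ) = 2) ∨ ((j : ℕ) = 0 ∧ (i : ℕ) = 2) ∨
     ((i : ℕ) = 1 ∧ (j : ℕ) = 2) ∨ ((j : ℕ) = 1 ∧ (i : ℕ) = 2) ∨
     (2 ≤ (i : ℕ) ∧ (i : ℕ) + 1 = (j : ℕ)) ∨ (2 ≤ (j : ℕ) ∧ (j : ℕ) + 1 = (i : ℕ))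
  then 1 else 0

def edgeE (n : ℕ) : Fin n → Fin n → ℕ := fun i j =>
  if ((i : ℕ) + 1 = (j : ℕ) ∧ (j : ℕ) ≤ n - 2) ∨ ((j : ℕ) + 1 = (i : ℕ) ∧ (i : ℕ) ≤ n - 2) ∨
     ((i : ℕ) = 2 ∧ (j : ℕ) = n - 1) ∨ ((j : ℕ) = 2 ∧ (i : ℕ) = n - 1)
  then 1 else 0

/-- The underlying graph (given by its edge-count function `E`) is a Dynkin diagram of
type `A`, `D`, or `E`. -/
def IsDynkinADE (n : ℕ) (E : Fin n → Fin n → ℕ) : Prop :=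
  ∃ e : Fin n ≃ Fin n,
    (∀ i j, E i j = edgeA n (e i) (e j)) ∨
    (4 ≤ n ∧ ∀ i j, E i j = edgeD n (e i) (e j)) ∨
    ((n = 6 ∨ n = 7 ∨ n = 8) ∧ ∀ i j, E i j = edgeE n (e i) (e j))

/-! ## Coxeter-sortable elements -/

/-- Lexicographic comparison of index tuples. -/
def lexLE {s : ℕ} (ι ι' : Fin s → ℕ) : Prop :=
  ι = ι' ∨ ∃ j, (∀ j', j' < j → ι j' = ι' j') ∧ ι j < ι' j

/-- `w` is `c`-sortable for the Coxeter element determined by the half-infinite word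
`cseq` (with dividers every `blockLen` letters): the lexicographically first subsequence
of `cseq` that is a reduced word for `w` defines a sequence of subsets (between adjacent
dividers) that is decreasing under inclusion. -/
def CSortable (A : Fin n → Fin n → ℤ) (hA : ∀ i, A i i = 2) (cseq : ℕ → Fin n)
    (blockLen : ℕ) (w : (Fin n → ℤ) ≃ₗ[ℤ] (Fin n → ℤ)) : Prop :=
  ∃ (s : ℕ) (ι : Fin s → ℕ), StrictMono ι ∧
    w = ((List.ofFn fun j => cseq (ι j)).map (sigmaE A hA)).prod ∧
    wordLen A hA w = s ∧
    (∀ ι' : Fin s → ℕ, StrictMono ι' →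
      w = ((List.ofFn fun j => cseq (ι' j)).map (sigmaE A hA)).prod → lexLE ι ι') ∧
    ∀ m : ℕ, {a : Fin n | ∃ j, (ι j) / blockLen = m + 1 ∧ cseq (ι j) = a} ⊆
             {a : Fin n | ∃ j, (ι j) / blockLen = m ∧ cseq (ι j) = a}


/-- A nonzero non-isomorphism between representations. -/
def RepStep {k : Type} [Field k] {n : ℕ} {Λ : Fin n → Fin n → ℕ} (X Y : Rep k n Λ) : Prop :=
  ∃ f : RepHom X Y, (∃ x v, f.g x v ≠ 0) ∧ ¬ ∀ x, Function.Bijective (f.g x)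

/-- `v` is a minimal element of `D` in the poset `(Γ₀, Λ)`. -/
def MinimalIn {n : ℕ} (Λ : Fin n → Fin n → ℕ) (D : Set (Fin n)) (v : Fin n) : Prop :=
  v ∈ D ∧ ∀ u ∈ D, PathLE Λ u v → u = v

/-- The pairs `(h, v)` of Proposition 3.2(a): `0 < h ≤ r` and `v` a minimal element of
`Supp S_h \ H_Λ(Supp S_{h+1})` (with `Supp S_{r+1} = ∅`). -/
def JoinPair {n : ℕ} (Λ : Fin n → Fin n → ℕ) (segs : List (List (Fin n)))
    (p : ℕ × Fin n) : Prop :=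
  0 < p.1 ∧ p.1 ≤ segs.length ∧
  MinimalIn Λ (suppOf (segs.getD (p.1 - 1) []) \ hull Λ (suppOf (segs.getD p.1 []))) p.2


variable {n : ℕ}

theorem edges_flipO (x : Fin n) (Λ : Fin n → Fin n → ℕ) : edges (flipO x Λ) = edges Λ := by
  funext a b
  simp only [edges, flipO]
  split_ifs <;> first | exact Nat.add_comm _ _ | rfl | tauto

theorem flipO_comm (x y : Fin n) (Λ : Fin n → Fin n → ℕ) :
    flipO x (flipO y Λ) = flipO y (flipO x Λ) := by
  funext a b
  simp only [flipO]
  split_ifs <;> first | rfl | tauto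

theorem orientAfter_append (Λ : Fin n → Fin n → ℕ) (l₁ l₂ : List (Fin n)) :
    orientAfter Λ (l₁ ++ l₂) = orientAfter (orientAfter Λ l₁) l₂ := by
  induction l₁ generalizing Λ with
  | nil => rfl
  | cons x xs ih =>
    simp only [List.cons_append, orientAfter]
    exact ih _

theorem admissible_append (Λ : Fin n → Fin n → ℕ) (l₁ l₂ : List (Fin n)) :
    Admissible Λ (l₁ ++ l₂) ↔ Admissible Λ l₁ ∧ Admissible (orientAfter Λ l₁) l₂ := by
  induction l₁ generalizing Λ with
  | nil => simp [Admissible, orientAfter]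
  | cons x xs ih => simp [Admissible, orientAfter, ih, and_assoc]

theorem edges_orientAfter (Λ : Fin n → Fin n → ℕ) (l : List (Fin n)) :
    edges (orientAfter Λ l) = edges Λ := by
  induction l generalizing Λ with
  | nil => rfl
  | cons x xs ih => rw [orientAfter, ih, edges_flipO]

theorem swapRel_perm {E : Fin n → Fin n → ℕ} {l l' : List (Fin n)} (h : SwapRel E l l') :
    l.Perm l' := by
  cases h with
  | swap l₁ l₂ a b _ => exact (List.Perm.append_left l₁ (List.Perm.swap b a l₂))

theorem sim_perm {E : Fin n → Fin n → ℕ} {l l' : List (Fin n)} (h : Sim E l l') :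
    l.Perm l' := by
  induction h with
  | refl => exact List.Perm.refl _
  | tail _ hstep ih => exact ih.trans (swapRel_perm hstep)

theorem sim_cons {E : Fin n → Fin n → ℕ} (x : Fin n) {l l' : List (Fin n)} (h : Sim E l l') :
    Sim E (x :: l) (x :: l') := by
  refine Relation.ReflTransGen.lift (x :: ·) (fun a b hab => ?_) _ _ h
  cases hab with
  | swap l₁ l₂ c d hcd => exact SwapRel.swap (x :: l₁) l₂ c d hcd

theorem isSink_flipO_of {Λ : Fin n → Fin n → ℕ} {x y : Fin n} (hx : IsSink Λ x)
    (hy : Λ y x = 0) (hxy : x ≠ y) : IsSink (flipO y Λ) x := by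
  intro z
  simp only [flipO]
  split_ifs with h
  · rcases h with h | h
    · exact absurd h hxy
    · subst h; exact hy
  · exact hx z

theorem admissible_swapRel {Λ : Fin n → Fin n → ℕ} {l l' : List (Fin n)}
    (h : SwapRel (edges Λ) l l') (hl : Admissible Λ l) : Admissible Λ l' := by
  cases h with
  | swap l₁ l₂ a b hab =>
    by_cases hab' : a = b
    · subst hab'; exact hl
    · rw [admissible_append] at hl ⊢
      obtain ⟨h1, ha, hb, hrest⟩ := hl
      set Λ' := orientAfter Λ l₁ with hΛ'
      have he : edges Λ' a b = 0 := by rw [edges_orientAfter]; exact hab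
      have hab0 : Λ' a b = 0 ∧ Λ' b a = 0 := by
        simp only [edges] at he
        constructor <;> omega
      refine ⟨h1, ?_, ?_, ?_⟩
      · intro y
        by_cases hy : y = a
        · subst hy; exact hab0.2
        · have := hb y
          simp only [flipO, hy, hab', or_self, if_false] at this
          simpa [flipO, hy, Ne.symm hab'] using hb y
      · intro y
        simp only [flipO]
        split_ifs with h
        · rcases h with h | h
          · exact absurd h hab'
          · subst h; exact hab0.2
        · exact ha y
      · rw [flipO_comm]; exact hrest

theorem admissible_sim {Λ : Fin n → Fin n → ℕ} {l l' : List (Fin n)}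
    (h : Sim (edges Λ) l l') (hl : Admissible Λ l) : Admissible Λ l' := by
  induction h with
  | refl => exact hl
  | tail _ hstep ih => exact admissible_swapRel hstep ih

theorem sink_to_front :
    ∀ (T : List (Fin n)) (Λ : Fin n → Fin n → ℕ) (x : Fin n), Admissible Λ T → IsSink Λ x →
      x ∈ T → ∃ T', Sim (edges Λ) T (x :: T') := by
  intro T
  induction T with
  | nil => intro _ _ _ _ h; simp at h
  | cons y T'' ih =>
    intro Λ x hT hx hmem
    by_cases hxy : x = y
    · subst hxy; exact ⟨T'', Relation.ReflTransGen.refl⟩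
    · have hmem'' : x ∈ T'' := by
        rcases List.mem_cons.mp hmem with h | h
        · exact absurd h hxy
        · exact h
      obtain ⟨hy, hT''⟩ := hT
      have hx' : IsSink (flipO y Λ) x := isSink_flipO_of hx (hy x) hxy
      obtain ⟨T₂, hsim⟩ := ih (flipO y Λ) x hT'' hx' hmem''
      rw [edges_flipO] at hsim
      refine ⟨y :: T₂, ?_⟩
      have h1 : Sim (edges Λ) (y :: T'') (y :: x :: T₂) := sim_cons y hsim
      have h2 : SwapRel (edges Λ) (y :: x :: T₂) (x :: y :: T₂) := by
        have h0 : edges Λ y x = 0 := by simp [edges, hx y, hy x]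
        exact SwapRel.swap [] T₂ y x h0
      exact h1.tail h2

theorem count_le_preceq :
    ∀ (S : List (Fin n)) (Λ : Fin n → Fin n → ℕ) (T : List (Fin n)),
      Admissible Λ S → Admissible Λ T → (∀ v, S.count v ≤ T.count v) → Preceq Λ S T := by
  intro S
  induction S with
  | nil => intro Λ T _ hT _; exact ⟨T, hT, Relation.ReflTransGen.refl⟩
  | cons x S' ih =>
    intro Λ T hS hT hcnt
    obtain ⟨hx, hS'⟩ := hS
    have hmem : x ∈ T := by
      have h := hcnt x
      simp [List.count_cons] at h
      have : 0 < T.count x := by omega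
      exact List.count_pos_iff.mp this
    obtain ⟨T', hsimT⟩ := sink_to_front T Λ x hT hx hmem
    have hxT' : Admissible Λ (x :: T') := admissible_sim hsimT hT
    obtain ⟨-, hT'⟩ := hxT'
    have hcnt' : ∀ v, S'.count v ≤ T'.count v := by
      intro v
      have hperm := (sim_perm hsimT).count_eq v
      have h := hcnt v
      rw [hperm] at h
      by_cases hv : v = x
      · subst hv; simp [List.count_cons] at h; omega
      · simp [List.count_cons, hv] at h; omega
    obtain ⟨U, hU, hsimU⟩ := ih (flipO x Λ) T' hS' hT' hcnt'
    rw [edges_flipO] at hsimU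
    exact ⟨U, hU, hsimT.trans (sim_cons x hsimU)⟩

theorem preceq_count {Λ : Fin n → Fin n → ℕ} {S T : List (Fin n)} (h : Preceq Λ S T)
    (v : Fin n) : S.count v ≤ T.count v := by
  obtain ⟨U, _, hsim⟩ := h
  have hp := (sim_perm hsim).count_eq v
  rw [hp, List.count_append]
  omega


theorem count_flatten_le_length {segs : List (List (Fin n))}
    (hnd : ∀ seg ∈ segs, seg.Nodup) (v : Fin n) :
    (segs.flatten).count v ≤ segs.length := by
  induction segs with
  | nil => simp
  | cons s ss ih =>
    rw [List.flatten_cons, List.count_append]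
    have h1 : s.count v ≤ 1 :=
      List.nodup_iff_count_le_one.mp (hnd s List.mem_cons_self) v
    have h2 := ih (fun seg h => hnd seg (List.mem_cons_of_mem _ h))
    simp only [List.length_cons]
    omega

theorem mem_getD_iff_lt_count {segs : List (List (Fin n))}
    (hnd : ∀ seg ∈ segs, seg.Nodup)
    (hp : segs.Pairwise (fun s t => suppOf t ⊆ suppOf s)) (v : Fin n) :
    ∀ i, i < segs.length → (v ∈ segs.getD i [] ↔ i < (segs.flatten).count v) := by
  induction segs with
  | nil => intro i hi; simp at hi
  | cons s ss ih =>
    have hnd' : ∀ seg ∈ ss, seg.Nodup := fun seg h => hnd seg (List.mem_cons_of_mem _ h)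
    obtain ⟨hhead, hp'⟩ := List.pairwise_cons.mp hp
    intro i hi
    rw [List.flatten_cons, List.count_append]
    match i with
    | 0 =>
      simp only [List.getD_cons_zero]
      constructor
      · intro hv
        have : 0 < s.count v := List.count_pos_iff.mpr hv
        omega
      · intro h
        by_contra hv
        have h1 : s.count v = 0 := List.count_eq_zero.mpr hv
        have h3 : v ∈ ss.flatten := List.count_pos_iff.mp (by omega)
        obtain ⟨t, ht, hvt⟩ := List.mem_flatten.mp h3
        exact hv (hhead t ht hvt)
    | i' + 1 =>
      simp only [List.getD_cons_succ]
      have hi' : i' < ss.length := by simpa using hi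
      constructor
      · intro hv
        have hlt : i' < (ss.flatten).count v := (ih hnd' hp' i' hi').mp hv
        have hgd : ss.getD i' [] ∈ ss := by
          rw [List.getD_eq_getElem ss [] hi']
          exact List.getElem_mem hi'
        have hvs : v ∈ s := hhead _ hgd hv
        have : 0 < s.count v := List.count_pos_iff.mpr hvs
        omega
      · intro h
        have h1 : s.count v ≤ 1 :=
          List.nodup_iff_count_le_one.mp (hnd s List.mem_cons_self) v
        exact (ih hnd' hp' i' hi').mpr (by omega)


theorem segs_pairwise {Λ : Fin n → Fin n → ℕ} {S : List (Fin n)} {segs : List (List (Fin n))}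
    (h : Segments Λ S segs) :
    segs.Pairwise (fun s t => suppOf t ⊆ suppOf s) := by
  obtain ⟨-, -, -, h4⟩ := h
  rw [List.pairwise_iff_getElem]
  intro i j hi hj hij v hv
  have h4i := h4 i hi
  have hmem : v ∈ (segs.drop i).flatten := by
    refine List.mem_flatten.mpr ⟨segs[j], ?_, hv⟩
    have hj' : j - i < (segs.drop i).length := by
      rw [List.length_drop]; omega
    have heq : (segs.drop i)[j - i]'hj' = segs[j] := by
      rw [List.getElem_drop]
      congr 1
      omega
    rw [← heq]
    exact List.getElem_mem hj'
  have hg : segs[i] = segs.getD i [] := (List.getD_eq_getElem segs [] hi).symm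
  show v ∈ suppOf segs[i]
  rw [hg, h4i]
  exact hmem

theorem preceq_iff_supports_iff_counts
    (n : ℕ) (hn : 2 ≤ n) (Λ : Fin n → Fin n → ℕ)
    (hloop : ∀ a, Λ a a = 0)
    (hconn : ∀ a b : Fin n, Relation.ReflTransGen (fun u v => edges Λ u v ≠ 0) a b)
    (hacyc : ∀ a : Fin n, ¬ Relation.TransGen (fun u v => Λ u v ≠ 0) a a)
    (S T : List (Fin n)) (hS : Admissible Λ S) (hT : Admissible Λ T)
    (hSne : S ≠ []) (hTne : T ≠ [])
    (segsS segsT : List (List (Fin n)))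
    (hcS : Segments Λ S segsS) (hcT : Segments Λ T segsT) :
    (Preceq Λ S T ↔ (segsS.length ≤ segsT.length ∧
      ∀ i, i < segsS.length → suppOf (segsS.getD i []) ⊆ suppOf (segsT.getD i []))) ∧
    (Preceq Λ S T ↔ ∀ v : Fin n, S.count v ≤ T.count v) := by
  have hndS : ∀ seg ∈ segsS, seg.Nodup := fun seg h => (hcS.2.2.1 seg h).2
  have hneS : ∀ seg ∈ segsS, seg ≠ [] := fun seg h => (hcS.2.2.1 seg h).1
  have hndT : ∀ seg ∈ segsT, seg.Nodup := fun seg h => (hcT.2.2.1 seg h).2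
  have hpS := segs_pairwise hcS
  have hpT := segs_pairwise hcT
  have hcountS : ∀ v, S.count v = (segsS.flatten).count v :=
    fun v => (sim_perm hcS.2.1).count_eq v
  have hcountT : ∀ v, T.count v = (segsT.flatten).count v :=
    fun v => (sim_perm hcT.2.1).count_eq v
  have hiff2 : Preceq Λ S T ↔ ∀ v, S.count v ≤ T.count v :=
    ⟨fun h v => preceq_count h v, fun h => count_le_preceq S Λ T hS hT h⟩
  have hrpos : 0 < segsS.length := by
    rcases segsS with _ | ⟨s, ss⟩
    · exfalso
      have hperm := sim_perm hcS.2.1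
      simp only [List.flatten_nil] at hperm
      exact hSne hperm.eq_nil
    · simp
  have hiff1 : (∀ v, S.count v ≤ T.count v) ↔
      (segsS.length ≤ segsT.length ∧
        ∀ i, i < segsS.length → suppOf (segsS.getD i []) ⊆ suppOf (segsT.getD i [])) := by
    constructor
    · intro hc
      have hc' : ∀ v, (segsS.flatten).count v ≤ (segsT.flatten).count v := fun v => by
        rw [← hcountS, ← hcountT]; exact hc v
      constructor
      · have hr1 : segsS.length - 1 < segsS.length := by omega
        have hlast : segsS.getD (segsS.length - 1) [] ∈ segsS := by
          rw [List.getD_eq_getElem segsS [] hr1]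
          exact List.getElem_mem hr1
        have hlne : segsS.getD (segsS.length - 1) [] ≠ [] := hneS _ hlast
        obtain ⟨v, hv⟩ := List.exists_mem_of_ne_nil _ hlne
        have h1 : segsS.length - 1 < (segsS.flatten).count v :=
          (mem_getD_iff_lt_count hndS hpS v _ hr1).mp hv
        have h2 := count_flatten_le_length hndT v
        have h3 := hc' v
        omega
      · intro i hir v hv
        have hv' : v ∈ segsS.getD i [] := hv
        have h1 : i < (segsS.flatten).count v :=
          (mem_getD_iff_lt_count hndS hpS v i hir).mp hv'
        have h2 : i < (segsT.flatten).count v := lt_of_lt_of_le h1 (hc' v)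
        have hiq : i < segsT.length :=
          lt_of_lt_of_le h2 (count_flatten_le_length hndT v)
        exact (mem_getD_iff_lt_count hndT hpT v i hiq).mpr h2
    · rintro ⟨hrq, hincl⟩ v
      rw [hcountS, hcountT]
      rcases Nat.eq_zero_or_pos ((segsS.flatten).count v) with h0 | h0
      · omega
      · have hcr : (segsS.flatten).count v ≤ segsS.length :=
          count_flatten_le_length hndS v
        have h1 : v ∈ segsS.getD ((segsS.flatten).count v - 1) [] :=
          (mem_getD_iff_lt_count hndS hpS v _ (by omega)).mpr (by omega)
        have h2 : v ∈ segsT.getD ((segsS.flatten).count v - 1) [] :=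
          hincl _ (by omega) h1
        have h3 : (segsS.flatten).count v - 1 < (segsT.flatten).count v :=
          (mem_getD_iff_lt_count hndT hpT v _ (by omega)).mp h2
        omega
  exact ⟨hiff2.trans hiff1, hiff2⟩


end KP
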